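/- For every graph polynomial P with integer coefficients there exists a map D assigning to every finite simple graph G a nonzero polynomial D(G;X) ∈ ℤ[X], with D(G₁;X) = D(G₂;X) whenever G₁ and G₂ are similar, such that the graph polynomial Q(G;X) = D(G;X) · P(G;X) satisfies: the set {z ∈ ℂ : Q(G;z) = 0 for some finite simple graph G} is dense in ℂ. -/

import Mathlib

open Polynomial

noncomputable def numEdges {n : ℕ} (G : SimpleGraph (Fin n)) : ℕ := G.edgeSet.ncard

noncomputable def numComponents {n : ℕ} (G : SimpleGraph (Fin n)) : ℕ :=
  Nat.card G.ConnectedComponent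

def GraphSimilar {n₁ n₂ : ℕ} (G₁ : SimpleGraph (Fin n₁)) (G₂ : SimpleGraph (Fin n₂)) : Prop :=
  n₁ = n₂ ∧ numEdges G₁ = numEdges G₂ ∧ numComponents G₁ = numComponents G₂

def IsGraphPolynomial (P : ∀ n : ℕ, SimpleGraph (Fin n) → Polynomial ℤ) : Prop :=
  ∀ (n : ℕ) (G H : SimpleGraph (Fin n)), Nonempty (G ≃g H) → P n G = P n H

def DPEquiv (P Q : ∀ n : ℕ, SimpleGraph (Fin n) → Polynomial ℤ) : Prop :=
  ∀ (n₁ n₂ : ℕ) (G₁ : SimpleGraph (Fin n₁)) (G₂ : SimpleGraph (Fin n₂)),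
    GraphSimilar G₁ G₂ → (P n₁ G₁ = P n₂ G₂ ↔ Q n₁ G₁ = Q n₂ G₂)



noncomputable def dd (a b : ℚ) : Polynomial ℤ :=
  (C ((a.den : ℤ) * b.den) * X - C (a.num * b.den)) ^ 2 + C ((a.den : ℤ) * b.num) ^ 2

lemma dd_ne_zero (a b : ℚ) : dd a b ≠ 0 := by
  intro h
  have h0 := congrArg (eval 0) h
  have h1 := congrArg (eval 1) h
  simp [dd] at h0 h1
  have hd : (a.den : ℤ) * b.den ≠ 0 := by
    simp [a.den_nz, b.den_nz]
  have e1 : (a.num * (b.den:ℤ)) ^ 2 = 0 ∧ ((a.den:ℤ) * b.num) ^ 2 = 0 :=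
    (add_eq_zero_iff_of_nonneg (sq_nonneg _) (sq_nonneg _)).mp h0
  have e2 : a.num * (b.den:ℤ) = 0 := by
    have := e1.1; exact pow_eq_zero_iff (n := 2) (by norm_num) |>.mp this
  rw [e2, sub_zero] at h1
  have e3 : ((a.den:ℤ) * b.den) ^ 2 = 0 ∧ ((a.den:ℤ) * b.num) ^ 2 = 0 :=
    (add_eq_zero_iff_of_nonneg (sq_nonneg _) (sq_nonneg _)).mp h1
  exact hd (pow_eq_zero_iff (n := 2) (by norm_num) |>.mp e3.1)

lemma dd_root (a b : ℚ) : aeval ((a : ℂ) + b * Complex.I) (dd a b) = 0 := by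
  have ha : (a.num : ℂ) = a * a.den := by exact_mod_cast (Rat.mul_den_eq_num a).symm
  have hb : (b.num : ℂ) = b * b.den := by exact_mod_cast (Rat.mul_den_eq_num b).symm
  simp only [dd, map_add, map_pow, map_sub, map_mul, aeval_C, aeval_X, eq_intCast, map_intCast]
  push_cast
  rw [ha, hb]
  linear_combination (((a.den:ℂ)*b.den*b)^2) * Complex.I_sq

noncomputable def qenum : ℕ ≃ ℚ × ℚ := (Denumerable.eqv (ℚ × ℚ)).symm

lemma dense_rat_complex :
    Dense (Set.range fun p : ℚ × ℚ => (p.1 : ℂ) + p.2 * Complex.I) := by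
  rw [Metric.dense_iff]
  intro z ε hε
  obtain ⟨a, ha⟩ := exists_rat_near z.re (by linarith : (0:ℝ) < ε/2)
  obtain ⟨b, hb⟩ := exists_rat_near z.im (by linarith : (0:ℝ) < ε/2)
  refine ⟨(a : ℂ) + b * Complex.I, ?_, ⟨(a, b), rfl⟩⟩
  rw [Metric.mem_ball, Complex.dist_eq]
  calc ‖(a:ℂ) + b*Complex.I - z‖
      ≤ |((a:ℂ) + b*Complex.I - z).re| + |((a:ℂ) + b*Complex.I - z).im| :=
        Complex.norm_le_abs_re_add_abs_im _
    _ < ε := by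
        simp only [Complex.sub_re, Complex.sub_im, Complex.add_re, Complex.add_im,
          Complex.mul_re, Complex.mul_im, Complex.I_re, Complex.I_im, Complex.ratCast_re,
          Complex.ratCast_im]
        have h1 : |(a:ℝ) + ((b:ℝ) * 0 - 0 * 1) - z.re| = |(a:ℝ) - z.re| := by ring_nf
        have h2 : |(0:ℝ) + ((b:ℝ) * 1 + 0 * 0) - z.im| = |(b:ℝ) - z.im| := by ring_nf
        rw [h1, h2, abs_sub_comm ((a:ℝ)), abs_sub_comm ((b:ℝ))]
        linarith

/-- For every graph polynomial P with integer coefficients there is a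
similarity-invariant map D into nonzero polynomials of ℤ[X] such that the roots of the
graph polynomial Q(G;X) = D(G;X)·P(G;X), over all graphs, are dense in ℂ. -/
theorem stmt_15 (P : ∀ n : ℕ, SimpleGraph (Fin n) → Polynomial ℤ)
    (hP : IsGraphPolynomial P) :
    ∃ D : ∀ n : ℕ, SimpleGraph (Fin n) → Polynomial ℤ,
      (∀ (n : ℕ) (G : SimpleGraph (Fin n)), D n G ≠ 0) ∧
      (∀ (n₁ n₂ : ℕ) (G₁ : SimpleGraph (Fin n₁)) (G₂ : SimpleGraph (Fin n₂)),
          GraphSimilar G₁ G₂ → D n₁ G₁ = D n₂ G₂) ∧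
      Dense {z : ℂ | ∃ (n : ℕ) (G : SimpleGraph (Fin n)),
        aeval z (D n G * P n G) = 0} := by

  refine ⟨fun n _ => dd (qenum n).1 (qenum n).2, fun n G => dd_ne_zero _ _, ?_, ?_⟩
  · rintro n₁ n₂ G₁ G₂ ⟨rfl, -, -⟩; rfl
  · refine dense_rat_complex.mono ?_
    rintro z ⟨⟨a, b⟩, rfl⟩
    refine ⟨qenum.symm (a, b), ⊥, ?_⟩
    simp only [map_mul, qenum.apply_symm_apply]
    simp [dd_root a b]
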